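/- Let l ≥ 1, s ≥ 0 and let G be a K_3-free graph on n vertices. Suppose U ⊆ V(G) with |U| = s is such that G[U] is a complete bipartite graph with parts of sizes x and y where x ≥ y ≥ 0 and x + y = s, G[V(G) \ U] is S_l-free, and I is a maximum independent set of G[V(G) \ U] with |I| > ⌊(n−s)/2⌋. Then e(G) ≤ s·|I| + (l−1)(n−s−|I|) + y·(n − 2|I| − y). -/

import Mathlib

open SimpleGraph

/-- `G` contains a copy of `H` (an injective graph homomorphism). -/
def Contains {α β : Type*} (G : SimpleGraph β) (H : SimpleGraph α) : Prop :=
  ∃ f : α ↪ β, ∀ a b, H.Adj a b → G.Adj (f a) (f b)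

/-- `G` is `H`-free. -/
def Free {α β : Type*} (G : SimpleGraph β) (H : SimpleGraph α) : Prop := ¬ Contains G H

/-- The Turán-type extremal number for a property `P` of graphs on `Fin n`. -/
noncomputable def exNum (n : ℕ) (P : SimpleGraph (Fin n) → Prop) : ℕ :=
  sSup {m | ∃ G : SimpleGraph (Fin n), P G ∧ G.edgeSet.ncard = m}

/-- The star forest consisting of `c` disjoint copies of the star `S_l`. -/
def starForest (c l : ℕ) : SimpleGraph (Fin c × (Unit ⊕ Fin l)) :=
  SimpleGraph.fromRel (fun x y => x.1 = y.1 ∧ x.2.isLeft ≠ y.2.isLeft)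

/-- The join of two graphs. -/
def join {α β : Type*} (G : SimpleGraph α) (H : SimpleGraph β) : SimpleGraph (α ⊕ β) :=
  SimpleGraph.fromRel (fun x y => match x, y with
    | Sum.inl a, Sum.inl b => G.Adj a b
    | Sum.inr a, Sum.inr b => H.Adj a b
    | _, _ => True)

set_option maxHeartbeats 1000000 in
theorem stmt15 (l s n x y : ℕ) (hl : 1 ≤ l) (G : SimpleGraph (Fin n))
    (hG3 : _root_.Free G (completeGraph (Fin 3)))
    (U U₁ U₂ : Finset (Fin n)) (hUcard : U.card = s)
    (hpart : U₁ ∪ U₂ = U) (hdisj : Disjoint U₁ U₂)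
    (hx : U₁.card = x) (hy : U₂.card = y) (hxy : y ≤ x) (hxys : x + y = s)
    (hbip : ∀ a ∈ U, ∀ b ∈ U,
      (G.Adj a b ↔ ((a ∈ U₁ ∧ b ∈ U₂) ∨ (a ∈ U₂ ∧ b ∈ U₁))))
    (hSl : _root_.Free (SimpleGraph.induce (↑(Uᶜ) : Set (Fin n)) G)
      (completeBipartiteGraph Unit (Fin l)))
    (I : Finset (Fin n)) (hIsub : I ⊆ Uᶜ) (hIind : ∀ a ∈ I, ∀ b ∈ I, ¬ G.Adj a b)
    (hImax : ∀ J : Finset (Fin n), J ⊆ Uᶜ → (∀ a ∈ J, ∀ b ∈ J, ¬ G.Adj a b) → J.card ≤ I.card)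
    (hIbig : (n - s) / 2 < I.card) :
    (G.edgeSet.ncard : ℤ) ≤
      (s : ℤ) * I.card + ((l : ℤ) - 1) * ((n : ℤ) - s - I.card) +
        (y : ℤ) * ((n : ℤ) - 2 * I.card - y) := by
  classical
  -- triangle-freeness as an elementwise statement
  have htri : ∀ a b c : Fin n, G.Adj a b → G.Adj a c → G.Adj b c → False := by
    intro a b c hab hac hbc
    apply hG3
    have hinj : Function.Injective ![a, b, c] := by
      intro i j hij
      fin_cases i <;> fin_cases j <;> simp_all <;>
        first
          | rfl
          | exact absurd hij hab.ne
          | exact absurd hij hac.ne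
          | exact absurd hij hbc.ne
          | exact absurd hij.symm hab.ne
          | exact absurd hij.symm hac.ne
          | exact absurd hij.symm hbc.ne
    refine ⟨⟨![a, b, c], hinj⟩, ?_⟩
    intro i j hij
    fin_cases i <;> fin_cases j <;>
      simp_all [completeGraph] <;>
      first
        | exact hab | exact hab.symm | exact hac | exact hac.symm
        | exact hbc | exact hbc.symm
  -- degree bound in W := Uᶜ
  set W : Finset (Fin n) := Uᶜ with hWdef
  have hdeg : ∀ v ∈ W, (W.filter (fun w => G.Adj v w)).card ≤ l - 1 := by
    intro v hv
    by_contra hcon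
    push_neg at hcon
    have hlle : l ≤ (W.filter (fun w => G.Adj v w)).card := by omega
    obtain ⟨S, hSsub, hScard⟩ := Finset.exists_subset_card_eq hlle
    apply hSl
    have hmem : ∀ w ∈ S, w ∈ W ∧ G.Adj v w := by
      intro w hw
      have := hSsub hw
      simp only [Finset.mem_filter] at this
      exact this
    let g : Fin l ≃o S := (S.orderIsoOfFin hScard)
    have hvW : (v : Fin n) ∈ (↑W : Set (Fin n)) := by simpa using hv
    have hgW : ∀ i : Fin l, ((g i : Fin n)) ∈ (↑W : Set (Fin n)) := by
      intro i; simpa using (hmem _ (g i).2).1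
    let f : Unit ⊕ Fin l → (↑W : Set (Fin n)) := fun z =>
      match z with
      | Sum.inl _ => ⟨v, hvW⟩
      | Sum.inr i => ⟨(g i : Fin n), hgW i⟩
    have hadjf : ∀ i : Fin l, G.Adj v (g i : Fin n) := fun i => (hmem _ (g i).2).2
    have hfinj : Function.Injective f := by
      intro p q hpq
      have hval : ((f p : Fin n)) = ((f q : Fin n)) :=
        congrArg (fun (z : (↑W : Set (Fin n))) => (z : Fin n)) hpq
      match p, q with
      | Sum.inl _, Sum.inl _ => rfl
      | Sum.inl _, Sum.inr j =>
        exact absurd hval (hadjf j).ne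
      | Sum.inr i, Sum.inl _ =>
        exact absurd hval.symm (hadjf i).ne
      | Sum.inr i, Sum.inr j =>
        have h2 : i = j := g.injective (Subtype.ext hval)
        rw [h2]
    refine ⟨⟨f, hfinj⟩, ?_⟩
    intro p q hpq
    match p, q with
    | Sum.inl _, Sum.inl _ => simp at hpq
    | Sum.inr i, Sum.inr j => simp at hpq
    | Sum.inl _, Sum.inr j =>
      show (G.induce _).Adj _ _
      exact hadjf j
    | Sum.inr i, Sum.inl _ =>
      show (G.induce _).Adj _ _
      exact (hadjf i).symm

  -- swap lemma for double counting
  have hswap : ∀ S T : Finset (Fin n),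
      ∑ v ∈ S, (T.filter (fun w => G.Adj v w)).card
        = ∑ v ∈ T, (S.filter (fun w => G.Adj v w)).card := by
    intro S T
    calc ∑ v ∈ S, (T.filter (fun w => G.Adj v w)).card
        = ∑ v ∈ S, ∑ w ∈ T, (if G.Adj v w then 1 else 0) := by
          refine Finset.sum_congr rfl fun v _ => ?_
          rw [Finset.card_filter]
      _ = ∑ w ∈ T, ∑ v ∈ S, (if G.Adj v w then 1 else 0) := Finset.sum_comm
      _ = ∑ w ∈ T, (S.filter (fun v => G.Adj w v)).card := by
          refine Finset.sum_congr rfl fun w _ => ?_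
          rw [Finset.card_filter]
          refine Finset.sum_congr rfl fun v _ => ?_
          by_cases h : G.Adj v w
          · rw [if_pos h, if_pos h.symm]
          · rw [if_neg h, if_neg (fun hh => h hh.symm)]
  -- membership in U parts
  have hU1U : U₁ ⊆ U := hpart ▸ Finset.subset_union_left
  have hU2U : U₂ ⊆ U := hpart ▸ Finset.subset_union_right
  -- the set A₂ of W-vertices with a neighbour in U₂
  set A2 : Finset (Fin n) := W.filter (fun w => ∃ u ∈ U₂, G.Adj w u) with hA2def
  have hA2W : A2 ⊆ W := Finset.filter_subset _ _
  -- neighbourhoods of U₁-vertices in W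
  have hU1nb : ∀ v ∈ U₁, (W.filter (fun w => G.Adj v w)).card ≤ I.card ∧
      (W.filter (fun w => G.Adj v w)) ⊆ W \ A2 := by
    intro v hv
    constructor
    · refine hImax _ (Finset.filter_subset _ _) ?_
      intro a ha b hb hab
      simp only [Finset.mem_filter] at ha hb
      exact htri v a b ha.2 hb.2 hab
    · intro w hw
      simp only [Finset.mem_filter] at hw
      rw [Finset.mem_sdiff]
      refine ⟨hw.1, fun hwA => ?_⟩
      rw [hA2def, Finset.mem_filter] at hwA
      obtain ⟨-, u, huU2, hadj⟩ := hwA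
      have hvu : G.Adj v u := (hbip v (hU1U hv) u (hU2U huU2)).2 (Or.inl ⟨hv, huU2⟩)
      exact htri v w u hw.2 hvu hadj
  -- U-neighbourhoods of U-vertices
  have hU1U2 : ∀ v ∈ U₁, U.filter (fun w => G.Adj v w) = U₂ := by
    intro v hv
    ext w
    simp only [Finset.mem_filter]
    constructor
    · rintro ⟨hwU, hadj⟩
      rcases (hbip v (hU1U hv) w hwU).1 hadj with ⟨-, h⟩ | ⟨h, -⟩
      · exact h
      · exact absurd hv (Finset.disjoint_left.1 hdisj.symm h)
    · intro hw
      exact ⟨hU2U hw, (hbip v (hU1U hv) w (hU2U hw)).2 (Or.inl ⟨hv, hw⟩)⟩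
  have hU2U1 : ∀ v ∈ U₂, U.filter (fun w => G.Adj v w) = U₁ := by
    intro v hv
    ext w
    simp only [Finset.mem_filter]
    constructor
    · rintro ⟨hwU, hadj⟩
      rcases (hbip v (hU2U hv) w hwU).1 hadj with ⟨h, -⟩ | ⟨-, h⟩
      · exact absurd hv (Finset.disjoint_left.1 hdisj h)
      · exact h
    · intro hw
      exact ⟨hU1U hw, (hbip v (hU2U hv) w (hU1U hw)).2 (Or.inr ⟨hv, hw⟩)⟩
  -- edge count via degree sum
  have h2e : 2 * G.edgeFinset.card
      = (∑ v ∈ U, (U.filter (fun w => G.Adj v w)).card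
          + ∑ v ∈ U, (W.filter (fun w => G.Adj v w)).card)
        + (∑ v ∈ W, (U.filter (fun w => G.Adj v w)).card
          + ∑ v ∈ W, (W.filter (fun w => G.Adj v w)).card) := by
    rw [← G.sum_degrees_eq_twice_card_edges]
    rw [← Finset.sum_add_distrib, ← Finset.sum_add_distrib]
    rw [← Finset.sum_add_sum_compl U]
    congr 1 <;>
    · refine Finset.sum_congr rfl fun v _ => ?_
      rw [SimpleGraph.degree, neighborFinset_eq_filter]
      rw [← Finset.card_union_of_disjoint
        (Finset.disjoint_filter_filter disjoint_compl_right)]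
      rw [← Finset.filter_union, Finset.union_compl]
  -- bound pieces
  have hSUU : ∑ v ∈ U, (U.filter (fun w => G.Adj v w)).card = x * y + y * x := by
    have hsplit := Finset.sum_union
      (f := fun v => (U.filter (fun w => G.Adj v w)).card) hdisj
    rw [hpart] at hsplit
    rw [hsplit]
    congr 1
    · calc ∑ v ∈ U₁, (U.filter (fun w => G.Adj v w)).card
          = ∑ _v ∈ U₁, y := Finset.sum_congr rfl (fun v hv => by rw [hU1U2 v hv, hy])
        _ = x * y := by rw [Finset.sum_const, hx, smul_eq_mul]
    · calc ∑ v ∈ U₂, (U.filter (fun w => G.Adj v w)).card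
          = ∑ _v ∈ U₂, x := Finset.sum_congr rfl (fun v hv => by rw [hU2U1 v hv, hx])
        _ = y * x := by rw [Finset.sum_const, hy, smul_eq_mul]
  have hSUW : ∑ v ∈ U, (W.filter (fun w => G.Adj v w)).card
      = ∑ v ∈ U₁, (W.filter (fun w => G.Adj v w)).card
        + ∑ v ∈ U₂, (W.filter (fun w => G.Adj v w)).card := by
    have hsplit := Finset.sum_union
      (f := fun v => (W.filter (fun w => G.Adj v w)).card) hdisj
    rw [hpart] at hsplit
    exact hsplit
  have hS1a : ∑ v ∈ U₁, (W.filter (fun w => G.Adj v w)).card ≤ x * I.card := by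
    calc ∑ v ∈ U₁, (W.filter (fun w => G.Adj v w)).card
        ≤ ∑ _v ∈ U₁, I.card := Finset.sum_le_sum (fun v hv => (hU1nb v hv).1)
      _ = x * I.card := by rw [Finset.sum_const, hx, smul_eq_mul]
  have hS1b : ∑ v ∈ U₁, (W.filter (fun w => G.Adj v w)).card ≤ x * (W \ A2).card := by
    calc ∑ v ∈ U₁, (W.filter (fun w => G.Adj v w)).card
        ≤ ∑ _v ∈ U₁, (W \ A2).card :=
          Finset.sum_le_sum (fun v hv => Finset.card_le_card (hU1nb v hv).2)
      _ = x * (W \ A2).card := by rw [Finset.sum_const, hx, smul_eq_mul]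
  have hS2 : ∑ v ∈ U₂, (W.filter (fun w => G.Adj v w)).card ≤ y * A2.card := by
    rw [hswap U₂ W]
    have hzero : ∀ v ∈ W \ A2, (U₂.filter (fun w => G.Adj v w)).card = 0 := by
      intro v hv
      rw [Finset.mem_sdiff] at hv
      rw [Finset.card_eq_zero, Finset.filter_eq_empty_iff]
      intro u hu hadj
      exact hv.2 (by rw [hA2def, Finset.mem_filter]; exact ⟨hv.1, u, hu, hadj⟩)
    calc ∑ v ∈ W, (U₂.filter (fun w => G.Adj v w)).card
        = ∑ v ∈ W \ A2, (U₂.filter (fun w => G.Adj v w)).card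
          + ∑ v ∈ A2, (U₂.filter (fun w => G.Adj v w)).card :=
          (Finset.sum_sdiff hA2W).symm
      _ = ∑ v ∈ A2, (U₂.filter (fun w => G.Adj v w)).card := by
          rw [Finset.sum_congr rfl hzero, Finset.sum_const, smul_eq_mul,
            mul_zero, zero_add]
      _ ≤ ∑ _v ∈ A2, y := Finset.sum_le_sum (fun v _ => by
          calc (U₂.filter (fun w => G.Adj v w)).card ≤ U₂.card :=
                Finset.card_le_card (Finset.filter_subset _ _)
            _ = y := hy)
      _ = A2.card * y := by rw [Finset.sum_const, smul_eq_mul]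
      _ = y * A2.card := Nat.mul_comm _ _
  have hIzero : ∀ v ∈ I, (I.filter (fun w => G.Adj v w)).card = 0 := by
    intro v hv
    rw [Finset.card_eq_zero, Finset.filter_eq_empty_iff]
    intro w hw hadj
    exact hIind v hv w hw hadj
  have hSWW : ∑ v ∈ W, (W.filter (fun w => G.Adj v w)).card
      ≤ 2 * ((l - 1) * (W \ I).card) := by
    have hWI : I ⊆ W := hIsub
    have hsub : ∀ v, (W.filter (fun w => G.Adj v w)).card
        = ((W \ I).filter (fun w => G.Adj v w)).card
          + (I.filter (fun w => G.Adj v w)).card := by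
      intro v
      rw [← Finset.card_union_of_disjoint
        (Finset.disjoint_filter_filter (Finset.sdiff_disjoint))]
      rw [← Finset.filter_union, Finset.sdiff_union_of_subset hWI]
    have hbound : ∀ v ∈ W \ I, (W.filter (fun w => G.Adj v w)).card ≤ l - 1 :=
      fun v hv => hdeg v (Finset.mem_sdiff.1 hv).1
    calc ∑ v ∈ W, (W.filter (fun w => G.Adj v w)).card
        = ∑ v ∈ W \ I, (W.filter (fun w => G.Adj v w)).card
          + ∑ v ∈ I, (W.filter (fun w => G.Adj v w)).card := (Finset.sum_sdiff hWI).symm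
      _ = ∑ v ∈ W \ I, (W.filter (fun w => G.Adj v w)).card
          + ∑ v ∈ I, ((W \ I).filter (fun w => G.Adj v w)).card := by
            congr 1
            refine Finset.sum_congr rfl fun v hv => ?_
            rw [hsub v, hIzero v hv, Nat.add_zero]
      _ = ∑ v ∈ W \ I, (W.filter (fun w => G.Adj v w)).card
          + ∑ v ∈ W \ I, (I.filter (fun w => G.Adj v w)).card := by
            rw [hswap I (W \ I)]
      _ ≤ ∑ v ∈ W \ I, (W.filter (fun w => G.Adj v w)).card
          + ∑ v ∈ W \ I, (W.filter (fun w => G.Adj v w)).card := by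
            refine Nat.add_le_add_left (Finset.sum_le_sum fun v _ => ?_) _
            exact Finset.card_le_card (Finset.filter_subset_filter _ hWI)
      _ ≤ (W \ I).card * (l - 1) + (W \ I).card * (l - 1) := by
            refine Nat.add_le_add ?_ ?_ <;>
            · calc ∑ v ∈ W \ I, (W.filter (fun w => G.Adj v w)).card
                  ≤ ∑ _v ∈ W \ I, (l - 1) := Finset.sum_le_sum hbound
                _ = (W \ I).card * (l - 1) := by rw [Finset.sum_const, smul_eq_mul]
      _ = 2 * ((l - 1) * (W \ I).card) := by ring
  have hSWU : ∑ v ∈ W, (U.filter (fun w => G.Adj v w)).card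
      = ∑ v ∈ U, (W.filter (fun w => G.Adj v w)).card := hswap W U
  -- cardinalities
  have hWcard : W.card + s = n := by
    rw [hWdef, Finset.card_compl, hUcard]
    have : s ≤ n := by rw [← hUcard]; simpa using Finset.card_le_card (Finset.subset_univ U)
    simp only [Fintype.card_fin]
    omega
  have hWIcard : (W \ I).card + I.card = W.card :=
    Finset.card_sdiff_add_card_eq_card hIsub
  have hWAcard : (W \ A2).card + A2.card = W.card :=
    Finset.card_sdiff_add_card_eq_card hA2W
  have hIW : I.card ≤ W.card := Finset.card_le_card hIsub
  -- pass to integers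
  have hE : G.edgeSet.ncard = G.edgeFinset.card := by
    rw [Set.ncard_eq_toFinset_card']
    congr 1
  rw [hE]
  have h2e' : 2 * G.edgeFinset.card
      = (x * y + y * x)
        + 2 * (∑ v ∈ U₁, (W.filter (fun w => G.Adj v w)).card
            + ∑ v ∈ U₂, (W.filter (fun w => G.Adj v w)).card)
        + ∑ v ∈ W, (W.filter (fun w => G.Adj v w)).card := by
    rw [h2e, hSUU, hSWU, hSUW]; ring
  have key : 2 * G.edgeFinset.card
      ≤ (x * y + y * x)
        + 2 * (∑ v ∈ U₁, (W.filter (fun w => G.Adj v w)).card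
            + ∑ v ∈ U₂, (W.filter (fun w => G.Adj v w)).card)
        + 2 * ((l - 1) * (W \ I).card) := by
    rw [h2e']
    exact Nat.add_le_add_left hSWW _
  zify [hl] at key hS1a hS1b hS2 hWcard hWIcard hWAcard hIW hxys ⊢
  have hWIZ : (((W \ I).card : ℤ)) = (W.card : ℤ) - (I.card : ℤ) := by
    linarith only [hWIcard]
  have hWAZ : (((W \ A2).card : ℤ)) = (W.card : ℤ) - (A2.card : ℤ) := by
    linarith only [hWAcard]
  have hsZ : (s : ℤ) = (x : ℤ) + (y : ℤ) := by linarith only [hxys]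
  have hnZ : (n : ℤ) = (W.card : ℤ) + (s : ℤ) := by linarith only [hWcard]
  rw [hWIZ] at key
  rw [hWAZ] at hS1b
  rw [hnZ, hsZ]
  have hy0 : (0 : ℤ) ≤ (y : ℤ) := Int.natCast_nonneg y
  have hxyZ : (y : ℤ) ≤ (x : ℤ) := by exact_mod_cast hxy
  by_cases hcase : (A2.card : ℤ) ≤ (W.card : ℤ) - (I.card : ℤ)
  · have h2 : (y : ℤ) * A2.card ≤ (y : ℤ) * ((W.card : ℤ) - I.card) :=
      mul_le_mul_of_nonneg_left hcase hy0
    linarith only [key, hS1a, hS2, h2]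
  · push_neg at hcase
    have hprod : (0 : ℤ) ≤ ((x : ℤ) - y) * ((A2.card : ℤ) - ((W.card : ℤ) - I.card)) :=
      mul_nonneg (sub_nonneg.2 hxyZ) (by linarith only [hcase])
    linarith only [key, hS1b, hS2, hprod, hxyZ, hy0]
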